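/- Let A be symmetric positive semidefinite with smallest nonzero eigenvalue λ̂ > 0, and let w be a vector in the range of A^{1/2}. If A^{1/2}w = −g − εd − e for vectors g, d, e and scalar ε > 0, then for any β > 1 and φ > 1: ‖w‖² ≤ (βε²/((β−1)λ̂))‖d‖² + (φβ/λ̂)‖g‖² + (βφ/((φ−1)λ̂))‖e‖². -/

import Mathlib

open Matrix

/-- The positive semidefinite square root of a positive semidefinite matrix
(the definition removed from Mathlib, restored verbatim). -/
noncomputable def Matrix.PosSemidef.sqrt {n : Type*} [Fintype n] [DecidableEq n]
    {A : Matrix n n ℝ} (hA : A.PosSemidef) : Matrix n n ℝ :=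
  hA.1.eigenvectorUnitary.1 * diagonal ((↑) ∘ (√·) ∘ hA.1.eigenvalues) *
  (star hA.1.eigenvectorUnitary : Matrix n n ℝ)

lemma Matrix.PosSemidef.posSemidef_sqrt {n : Type*} [Fintype n] [DecidableEq n]
    {A : Matrix n n ℝ} (hA : A.PosSemidef) : hA.sqrt.PosSemidef := by
  unfold Matrix.PosSemidef.sqrt
  rw [show (star hA.1.eigenvectorUnitary : Matrix n n ℝ)
      = (hA.1.eigenvectorUnitary : Matrix n n ℝ)ᴴ from rfl]
  apply PosSemidef.mul_mul_conjTranspose_same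
  refine posSemidef_diagonal_iff.mpr fun i => ?_
  simp [Real.sqrt_nonneg]

lemma Matrix.PosSemidef.sqrt_mul_self {n : Type*} [Fintype n] [DecidableEq n]
    {A : Matrix n n ℝ} (hA : A.PosSemidef) : hA.sqrt * hA.sqrt = A := by
  have hspec := hA.1.spectral_theorem
  rw [Unitary.conjStarAlgAut_apply] at hspec
  have hUU : (star hA.1.eigenvectorUnitary : Matrix n n ℝ) * hA.1.eigenvectorUnitary.1 = 1 :=
    mem_unitaryGroup_iff'.mp (hA.1.eigenvectorUnitary).2
  unfold Matrix.PosSemidef.sqrt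
  conv_rhs => rw [hspec]
  calc _ = (hA.1.eigenvectorUnitary.1 * (diagonal ((↑) ∘ (√·) ∘ hA.1.eigenvalues) *
        (((star hA.1.eigenvectorUnitary : Matrix n n ℝ) * hA.1.eigenvectorUnitary.1) *
        (diagonal ((↑) ∘ (√·) ∘ hA.1.eigenvalues) *
        (star hA.1.eigenvectorUnitary : Matrix n n ℝ))))) := by
        simp only [Matrix.mul_assoc]
    _ = _ := by
      rw [hUU, Matrix.one_mul, ← Matrix.mul_assoc (diagonal _), diagonal_mul_diagonal,
        Matrix.mul_assoc]
      congr 3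
      funext i
      simp [Real.mul_self_sqrt (hA.eigenvalues_nonneg i)]

private lemma young_aux {a b c : ℝ} (ε : ℝ) {β φ : ℝ} (hβ : 1 < β) (hφ : 1 < φ) :
    (a + ε * b + c) ^ 2 ≤
      β * ε ^ 2 / (β - 1) * b ^ 2 + φ * β * a ^ 2 + β * φ / (φ - 1) * c ^ 2 := by
  have hb : (0:ℝ) < β - 1 := by linarith
  have hp : (0:ℝ) < φ - 1 := by linarith
  have hpos : (0:ℝ) < (β - 1) * (φ - 1) := mul_pos hb hp
  have key : (a + ε * b + c) ^ 2 * ((β - 1) * (φ - 1)) ≤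
      (φ - 1) * (β * ε ^ 2 * b ^ 2) + (β - 1) * (φ - 1) * (φ * β * a ^ 2)
        + (β - 1) * (β * φ * c ^ 2) := by
    nlinarith [mul_nonneg hp.le (sq_nonneg ((β - 1) * (a + c) - ε * b)),
      mul_nonneg (mul_nonneg (by linarith : (0:ℝ) ≤ β) hb.le) (sq_nonneg ((φ - 1) * a - c))]
  have e1 : (β * ε ^ 2 / (β - 1) * b ^ 2 + φ * β * a ^ 2 + β * φ / (φ - 1) * c ^ 2)
      * ((β - 1) * (φ - 1)) =
      (φ - 1) * (β * ε ^ 2 * b ^ 2) + (β - 1) * (φ - 1) * (φ * β * a ^ 2)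
        + (β - 1) * (β * φ * c ^ 2) := by
    field_simp
  rw [← mul_le_mul_iff_of_pos_right hpos, e1]
  exact key

theorem dual_error_bound_with_error {n : ℕ} (A : Matrix (Fin n) (Fin n) ℝ)
    (hA : A.PosSemidef) (lam : ℝ) (hlam : 0 < lam)
    (hlam_min : ∀ i, hA.1.eigenvalues i ≠ 0 → lam ≤ hA.1.eigenvalues i)
    (w g d e : Fin n → ℝ) (ε β φ : ℝ) (hε : 0 < ε) (hβ : 1 < β) (hφ : 1 < φ)
    (hw : ∃ y, w = hA.sqrt.mulVec y)
    (hid : hA.sqrt.mulVec w = -g - ε • d - e) :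
    ∑ i, w i ^ 2 ≤
      β * ε ^ 2 / ((β - 1) * lam) * ∑ i, d i ^ 2 + φ * β / lam * ∑ i, g i ^ 2 +
        β * φ / ((φ - 1) * lam) * ∑ i, e i ^ 2 := by
  classical
  obtain ⟨y, hy⟩ := hw
  set S := hA.sqrt with hSdef
  have hS : S.PosSemidef := hA.posSemidef_sqrt
  have hSsq : S * S = A := hA.sqrt_mul_self
  have hSsym : Sᵀ = S := hS.1
  have hAsym : Aᵀ = A := hA.1
  -- symmetric dot product helper
  have dot_symm : ∀ (M : Matrix (Fin n) (Fin n) ℝ), Mᵀ = M →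
      ∀ v u : Fin n → ℝ, (M *ᵥ v) ⬝ᵥ u = v ⬝ᵥ (M *ᵥ u) := by
    intro M hM v u
    rw [dotProduct_mulVec, ← mulVec_transpose, hM]
  -- PSD of A*A - lam • A
  have hB : (A * A - lam • A).PosSemidef := by
    have hspec := hA.1.spectral_theorem
    rw [Unitary.conjStarAlgAut_apply] at hspec
    set U : Matrix (Fin n) (Fin n) ℝ := (hA.1.eigenvectorUnitary : Matrix (Fin n) (Fin n) ℝ) with hU
    set D : Matrix (Fin n) (Fin n) ℝ := diagonal (RCLike.ofReal ∘ hA.1.eigenvalues) with hD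
    have hUU : star U * U = 1 := mem_unitaryGroup_iff'.mp (hA.1.eigenvectorUnitary).2
    have hAA : A * A = U * (D * D) * star U := by
      rw [hspec]
      calc U * D * star U * (U * D * star U)
          = U * (D * ((star U * U) * (D * star U))) := by
            simp only [Matrix.mul_assoc]
        _ = U * (D * D) * star U := by rw [hUU, Matrix.one_mul]; simp only [Matrix.mul_assoc]
    have hlA : lam • A = U * (lam • D) * star U := by
      rw [hspec, Matrix.mul_smul, Matrix.smul_mul]
    have hdiag : A * A - lam • A =
        U * diagonal (fun i => hA.1.eigenvalues i ^ 2 - lam * hA.1.eigenvalues i) * star U := by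
      rw [hAA, hlA, ← Matrix.sub_mul, ← Matrix.mul_sub]
      congr 2
      rw [hD, diagonal_mul_diagonal, ← diagonal_smul, ← diagonal_sub]
      congr 1
      funext i
      simp [pow_two]
    rw [hdiag, star_eq_conjTranspose]
    apply PosSemidef.mul_mul_conjTranspose_same
    refine posSemidef_diagonal_iff.mpr fun i => ?_
    rcases eq_or_ne (hA.1.eigenvalues i) 0 with h | h
    · simp [h]
    · have h1 := hlam_min i h
      have h2 := hA.eigenvalues_nonneg i
      nlinarith
  -- quadratic form inequality
  have hq : 0 ≤ y ⬝ᵥ ((A * A - lam • A) *ᵥ y) := by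
    have := hB.dotProduct_mulVec_nonneg y
    simpa using this
  have hq' : lam * (y ⬝ᵥ (A *ᵥ y)) ≤ y ⬝ᵥ ((A * A) *ᵥ y) := by
    rw [sub_mulVec, smul_mulVec, dotProduct_sub, dotProduct_smul, smul_eq_mul] at hq
    linarith
  -- identify the sums
  have hw2 : ∑ i, w i ^ 2 = y ⬝ᵥ (A *ᵥ y) := by
    have h1 : w ⬝ᵥ w = y ⬝ᵥ (A *ᵥ y) := by
      rw [hy, dot_symm S hSsym, mulVec_mulVec, hSsq]
    rw [← h1]
    simp [dotProduct, pow_two]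
  have hSw : S *ᵥ w = A *ᵥ y := by rw [hy, mulVec_mulVec, hSsq]
  have hSw2 : ∑ i, (g i + ε * d i + e i) ^ 2 = y ⬝ᵥ ((A * A) *ᵥ y) := by
    have h1 : (A *ᵥ y) ⬝ᵥ (A *ᵥ y) = y ⬝ᵥ ((A * A) *ᵥ y) := by
      rw [dot_symm A hAsym, mulVec_mulVec]
    rw [← h1, ← hSw, hid]
    simp only [dotProduct]
    refine Finset.sum_congr rfl fun i _ => ?_
    simp [pow_two]
    ring
  -- Young inequality summed
  have hsum : ∑ i, (g i + ε * d i + e i) ^ 2 ≤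
      β * ε ^ 2 / (β - 1) * ∑ i, d i ^ 2 + φ * β * ∑ i, g i ^ 2 +
        β * φ / (φ - 1) * ∑ i, e i ^ 2 := by
    rw [Finset.mul_sum, Finset.mul_sum, Finset.mul_sum, ← Finset.sum_add_distrib,
      ← Finset.sum_add_distrib]
    exact Finset.sum_le_sum fun i _ => young_aux ε hβ hφ
  have hmain : lam * ∑ i, w i ^ 2 ≤
      β * ε ^ 2 / (β - 1) * ∑ i, d i ^ 2 + φ * β * ∑ i, g i ^ 2 +
        β * φ / (φ - 1) * ∑ i, e i ^ 2 := by
    rw [hw2]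
    calc lam * (y ⬝ᵥ (A *ᵥ y)) ≤ y ⬝ᵥ ((A * A) *ᵥ y) := hq'
      _ = ∑ i, (g i + ε * d i + e i) ^ 2 := hSw2.symm
      _ ≤ _ := hsum
  have hb : (0:ℝ) < β - 1 := by linarith
  have hp : (0:ℝ) < φ - 1 := by linarith
  have heq : β * ε ^ 2 / ((β - 1) * lam) * ∑ i, d i ^ 2 + φ * β / lam * ∑ i, g i ^ 2 +
        β * φ / ((φ - 1) * lam) * ∑ i, e i ^ 2 =
      (β * ε ^ 2 / (β - 1) * ∑ i, d i ^ 2 + φ * β * ∑ i, g i ^ 2 +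
        β * φ / (φ - 1) * ∑ i, e i ^ 2) / lam := by
    field_simp
  rw [heq, le_div_iff₀ hlam]
  linarith [hmain]
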